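/- For every positive rational number q, one has ∑_{d : φ(d)/d = q} 1/d ≤ 1, where the sum ranges over all natural numbers d ≥ 1 with φ(d)/d = q. -/
import Mathlib


open scoped BigOperators ENNReal

open Finset

/-- If `P` is a prime upper bound of `S ∪ T`, belongs to `S`, and the cross-multiplied
totient-ratio equation holds, then `P ∈ T`. -/
lemma aux_mem {S T : Finset ℕ} (hS : ∀ p ∈ S, p.Prime) (hT : ∀ p ∈ T, p.Prime)
    (heq : (∏ p ∈ S, (p - 1)) * ∏ p ∈ T, p = (∏ p ∈ T, (p - 1)) * ∏ p ∈ S, p)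
    {P : ℕ} (hP : P.Prime) (hPS : P ∈ S) (hmaxS : ∀ q ∈ S, q ≤ P)
    (hmaxT : ∀ q ∈ T, q ≤ P) : P ∈ T := by
  have hdvd : P ∣ (∏ p ∈ S, (p - 1)) * ∏ p ∈ T, p := by
    rw [heq]
    exact Dvd.dvd.mul_left (Finset.dvd_prod_of_mem _ hPS) _
  rcases (Nat.Prime.dvd_mul hP).mp hdvd with h | h
  · exfalso
    obtain ⟨x, hxS, hx⟩ := hP.prime.exists_mem_finset_dvd h
    have h2 : 2 ≤ x := (hS x hxS).two_le
    have h3 : P ≤ x - 1 := Nat.le_of_dvd (by omega) hx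
    have h4 := hmaxS x hxS
    omega
  · obtain ⟨x, hxT, hx⟩ := hP.prime.exists_mem_finset_dvd h
    rwa [(Nat.prime_dvd_prime_iff_eq hP (hT x hxT)).mp hx]

/-- Uniqueness: a finset of primes is determined by `∏ (p-1) / ∏ p`. -/
lemma aux_unique : ∀ n : ℕ, ∀ S T : Finset ℕ, S.card + T.card ≤ n →
    (∀ p ∈ S, p.Prime) → (∀ p ∈ T, p.Prime) →
    (∏ p ∈ S, (p - 1)) * ∏ p ∈ T, p = (∏ p ∈ T, (p - 1)) * ∏ p ∈ S, p → S = T := by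
  intro n
  induction n with
  | zero =>
    intro S T hc _ _ _
    have hS : S = ∅ := card_eq_zero.mp (by omega)
    have hT : T = ∅ := card_eq_zero.mp (by omega)
    rw [hS, hT]
  | succ n ih =>
    intro S T hc hS hT heq
    have hlt : ∀ U : Finset ℕ, (∀ p ∈ U, p.Prime) → U.Nonempty →
        ∏ p ∈ U, (p - 1) < ∏ p ∈ U, p := by
      intro U hU hUne
      exact Finset.prod_lt_prod_of_nonempty
        (fun p hp => by have := (hU p hp).two_le; omega)
        (fun p hp => by have := (hU p hp).two_le; omega) hUne
    rcases S.eq_empty_or_nonempty with rfl | hSne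
    · rcases T.eq_empty_or_nonempty with rfl | hTne
      · rfl
      · exfalso
        simp only [Finset.prod_empty, one_mul, mul_one] at heq
        have := hlt T hT hTne
        omega
    rcases T.eq_empty_or_nonempty with rfl | hTne
    · exfalso
      simp only [Finset.prod_empty, one_mul, mul_one] at heq
      have := hlt S hS hSne
      omega
    · have hUne : (S ∪ T).Nonempty := hSne.mono Finset.subset_union_left
      set P := (S ∪ T).max' hUne with hPdef
      have hPmem : P ∈ S ∪ T := (S ∪ T).max'_mem hUne
      have hmax : ∀ x ∈ S ∪ T, x ≤ P := fun x hx => Finset.le_max' _ _ hx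
      have hmaxS : ∀ x ∈ S, x ≤ P := fun x hx => hmax x (Finset.mem_union_left _ hx)
      have hmaxT : ∀ x ∈ T, x ≤ P := fun x hx => hmax x (Finset.mem_union_right _ hx)
      have hPprime : P.Prime := by
        rcases Finset.mem_union.mp hPmem with h | h
        exacts [hS _ h, hT _ h]
      have hPS : P ∈ S ∧ P ∈ T := by
        rcases Finset.mem_union.mp hPmem with h | h
        · exact ⟨h, aux_mem hS hT heq hPprime h hmaxS hmaxT⟩
        · exact ⟨aux_mem hT hS heq.symm hPprime h hmaxT hmaxS, h⟩
      obtain ⟨h1, h2⟩ := hPS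
      have hScard : 0 < S.card := Finset.card_pos.mpr hSne
      have hTcard : 0 < T.card := Finset.card_pos.mpr hTne
      have hSi : S = insert P (S.erase P) := (Finset.insert_erase h1).symm
      have hTi : T = insert P (T.erase P) := (Finset.insert_erase h2).symm
      rw [hSi, hTi, Finset.prod_insert (Finset.notMem_erase _ _),
        Finset.prod_insert (Finset.notMem_erase _ _),
        Finset.prod_insert (Finset.notMem_erase _ _),
        Finset.prod_insert (Finset.notMem_erase _ _)] at heq
      have hpos : 0 < (P - 1) * P := by
        have := hPprime.two_le; exact Nat.mul_pos (by omega) (by omega)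
      have heq' : (∏ p ∈ S.erase P, (p - 1)) * ∏ p ∈ T.erase P, p =
          (∏ p ∈ T.erase P, (p - 1)) * ∏ p ∈ S.erase P, p := by
        apply Nat.eq_of_mul_eq_mul_left hpos
        calc (P - 1) * P * ((∏ p ∈ S.erase P, (p - 1)) * ∏ p ∈ T.erase P, p)
            = (P - 1) * (∏ p ∈ S.erase P, (p - 1)) * (P * ∏ p ∈ T.erase P, p) := by ring
          _ = (P - 1) * (∏ p ∈ T.erase P, (p - 1)) * (P * ∏ p ∈ S.erase P, p) := heq
          _ = (P - 1) * P * ((∏ p ∈ T.erase P, (p - 1)) * ∏ p ∈ S.erase P, p) := by ring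
      have hcard : (S.erase P).card + (T.erase P).card ≤ n := by
        rw [Finset.card_erase_of_mem h1, Finset.card_erase_of_mem h2]
        omega
      have := ih (S.erase P) (T.erase P) hcard
        (fun p hp => hS p (Finset.mem_of_mem_erase hp))
        (fun p hp => hT p (Finset.mem_of_mem_erase hp)) heq'
      rw [hSi, hTi, this]

/-- bridge: `∏ (1 - p⁻¹)` as a quotient of naturals. -/
lemma aux_bridge (S : Finset ℕ) (hS : ∀ p ∈ S, p.Prime) :
    ∏ p ∈ S, (1 - (p : ℚ)⁻¹) =
      ((∏ p ∈ S, (p - 1) : ℕ) : ℚ) / ((∏ p ∈ S, p : ℕ) : ℚ) := by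
  rw [Nat.cast_prod, Nat.cast_prod, ← Finset.prod_div_distrib]
  refine Finset.prod_congr rfl fun p hp => ?_
  have hp2 := (hS p hp).two_le
  have hp0 : (p : ℚ) ≠ 0 := by positivity
  rw [Nat.cast_sub (by omega), eq_div_iff hp0]
  push_cast
  field_simp

lemma aux_ratio_eq {d e : ℕ} (hd : 0 < d) (he : 0 < e)
    (h : (Nat.totient d : ℚ) / d = (Nat.totient e : ℚ) / e) :
    d.primeFactors = e.primeFactors := by
  have hd0 : (d : ℚ) ≠ 0 := by positivity
  have he0 : (e : ℚ) ≠ 0 := by positivity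
  rw [Nat.totient_eq_mul_prod_factors, Nat.totient_eq_mul_prod_factors,
    mul_div_cancel_left₀ _ hd0, mul_div_cancel_left₀ _ he0] at h
  have hSd : ∀ p ∈ d.primeFactors, p.Prime := fun p hp => Nat.prime_of_mem_primeFactors hp
  have hSe : ∀ p ∈ e.primeFactors, p.Prime := fun p hp => Nat.prime_of_mem_primeFactors hp
  rw [aux_bridge _ hSd, aux_bridge _ hSe] at h
  have hpd : 0 < ∏ p ∈ d.primeFactors, p :=
    Finset.prod_pos fun p hp => (hSd p hp).pos
  have hpe : 0 < ∏ p ∈ e.primeFactors, p :=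
    Finset.prod_pos fun p hp => (hSe p hp).pos
  rw [div_eq_div_iff (by exact_mod_cast hpd.ne') (by exact_mod_cast hpe.ne')] at h
  have h' : (∏ p ∈ d.primeFactors, (p - 1)) * ∏ p ∈ e.primeFactors, p =
      (∏ p ∈ e.primeFactors, (p - 1)) * ∏ p ∈ d.primeFactors, p := by
    exact_mod_cast h
  exact aux_unique (d.primeFactors.card + e.primeFactors.card) _ _ le_rfl hSd hSe h'

/-- Euler product over ℝ≥0∞ for factored numbers. -/
lemma aux_euler (S : Finset ℕ) : (∀ p ∈ S, p.Prime) →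
    ∑' m : Nat.factoredNumbers S, ((m : ℕ) : ℝ≥0∞)⁻¹ =
      ∏ p ∈ S, (1 - ((p : ℝ≥0∞))⁻¹)⁻¹ := by
  induction S using Finset.induction_on with
  | empty =>
    intro _
    rw [Nat.factoredNumbers_empty, Finset.prod_empty]
    rw [tsum_eq_single (⟨1, rfl⟩ : ({1} : Set ℕ))]
    · simp
    · intro b hb
      exfalso
      exact hb (Subtype.ext b.2)
  | @insert a s has ih =>
    intro hS
    have hp : a.Prime := hS a (Finset.mem_insert_self _ _)
    have hs' : ∀ p ∈ s, p.Prime := fun p hp' => hS p (Finset.mem_insert_of_mem hp')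
    rw [← Equiv.tsum_eq (Nat.equivProdNatFactoredNumbers hp has)]
    have key : ∀ x : ℕ × Nat.factoredNumbers s,
        (((Nat.equivProdNatFactoredNumbers hp has) x : ℕ) : ℝ≥0∞)⁻¹ =
          (((a : ℝ≥0∞))⁻¹) ^ x.1 * (((x.2 : ℕ) : ℝ≥0∞))⁻¹ := by
      intro x
      rw [Nat.equivProdNatFactoredNumbers_apply' hp has]
      push_cast
      rw [ENNReal.mul_inv (Or.inr (ENNReal.natCast_ne_top _))
        (Or.inl (by exact ENNReal.pow_ne_top (ENNReal.natCast_ne_top _))), ENNReal.inv_pow]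
    simp only [key]
    rw [ENNReal.tsum_prod']
    simp only [ENNReal.tsum_mul_left]
    rw [ENNReal.tsum_mul_right, ENNReal.tsum_geometric, ih hs',
      Finset.prod_insert has]

lemma aux_factor_le (a : ℕ) (ha : a.Prime) :
    ((a : ℝ≥0∞))⁻¹ * (1 - ((a : ℝ≥0∞))⁻¹)⁻¹ ≤ 1 := by
  have h2 : (2 : ℝ≥0∞) ≤ (a : ℝ≥0∞) := by exact_mod_cast Nat.cast_le.mpr ha.two_le
  have ha0 : (a : ℝ≥0∞) ≠ 0 := by
    simpa using ha.pos.ne'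
  have hat : (a : ℝ≥0∞) ≠ ⊤ := ENNReal.natCast_ne_top _
  have hsub : (1 : ℝ≥0∞) - (a : ℝ≥0∞)⁻¹ = ((a : ℝ≥0∞) - 1) * (a : ℝ≥0∞)⁻¹ := by
    rw [ENNReal.sub_mul (fun _ _ => ENNReal.inv_ne_top.mpr ha0), one_mul,
      ENNReal.mul_inv_cancel ha0 hat]
  rw [hsub, ENNReal.mul_inv (Or.inl ?_) (Or.inl ?_)]
  · rw [inv_inv, mul_comm ((a : ℝ≥0∞) - 1)⁻¹]
    rw [← mul_assoc, ENNReal.inv_mul_cancel ha0 hat, one_mul]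
    rw [ENNReal.inv_le_one]
    exact ENNReal.le_sub_of_add_le_left ENNReal.one_ne_top (by rw [one_add_one_eq_two]; exact h2)
  · -- (a - 1) ≠ 0
    intro h
    rw [tsub_eq_zero_iff_le] at h
    have : (2 : ℝ≥0∞) ≤ 1 := le_trans h2 h
    norm_num at this
  · exact ENNReal.sub_ne_top hat

lemma aux_bound (S : Finset ℕ) : (∀ p ∈ S, p.Prime) →
    (((∏ p ∈ S, p : ℕ) : ℝ≥0∞))⁻¹ * ∏ p ∈ S, (1 - ((p : ℝ≥0∞))⁻¹)⁻¹ ≤ 1 := by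
  induction S using Finset.induction_on with
  | empty => intro _; simp
  | @insert a s has ih =>
    intro hS
    have hp : a.Prime := hS a (Finset.mem_insert_self _ _)
    have hs' : ∀ p ∈ s, p.Prime := fun p hp' => hS p (Finset.mem_insert_of_mem hp')
    rw [Finset.prod_insert has, Finset.prod_insert has, Nat.cast_mul]
    rw [ENNReal.mul_inv (Or.inr (ENNReal.natCast_ne_top _))
      (Or.inl (ENNReal.natCast_ne_top _))]
    calc (a : ℝ≥0∞)⁻¹ * (((∏ p ∈ s, p : ℕ) : ℝ≥0∞))⁻¹ *
          ((1 - (a : ℝ≥0∞)⁻¹)⁻¹ * ∏ p ∈ s, (1 - (p : ℝ≥0∞)⁻¹)⁻¹)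
        = ((a : ℝ≥0∞)⁻¹ * (1 - (a : ℝ≥0∞)⁻¹)⁻¹) *
          ((((∏ p ∈ s, p : ℕ) : ℝ≥0∞))⁻¹ * ∏ p ∈ s, (1 - (p : ℝ≥0∞)⁻¹)⁻¹) := by ring
      _ ≤ 1 * 1 := mul_le_mul' (aux_factor_le a hp) (ih hs')
      _ = 1 := by norm_num

theorem stmt2 (q : ℚ) (hq : 0 < q) :
    ∑' d : {d : ℕ // 0 < d ∧ (Nat.totient d : ℚ) / d = q}, (1 : ℝ≥0∞) / (d.1 : ℝ≥0∞) ≤ 1 := by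
  by_cases hne : Nonempty {d : ℕ // 0 < d ∧ (Nat.totient d : ℚ) / d = q}
  · obtain ⟨⟨d₀, hd₀pos, hd₀q⟩⟩ := hne
    set S := d₀.primeFactors with hSdef
    have hSprime : ∀ p ∈ S, p.Prime := fun p hp => Nat.prime_of_mem_primeFactors hp
    set r := ∏ p ∈ S, p with hrdef
    have hrpos : 0 < r := Finset.prod_pos fun p hp => (hSprime p hp).pos
    have hfac : ∀ d : {d : ℕ // 0 < d ∧ (Nat.totient d : ℚ) / d = q},
        d.1.primeFactors = S := by
      rintro ⟨d, hd, hdq⟩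
      exact aux_ratio_eq hd hd₀pos (hdq.trans hd₀q.symm)
    have hdvd : ∀ d : {d : ℕ // 0 < d ∧ (Nat.totient d : ℚ) / d = q}, r ∣ d.1 := by
      intro d
      rw [hrdef, ← hfac d]
      exact Nat.prod_primeFactors_dvd _
    have hmem : ∀ d : {d : ℕ // 0 < d ∧ (Nat.totient d : ℚ) / d = q},
        d.1 / r ∈ Nat.factoredNumbers S := by
      intro d
      have hdm : d.1 ∈ Nat.factoredNumbers S :=
        Nat.mem_factoredNumbers_of_primeFactors_subset d.2.1.ne' (le_of_eq (hfac d))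
      exact Nat.mem_factoredNumbers_of_dvd hdm (Nat.div_dvd_of_dvd (hdvd d))
    have hinj : Function.Injective
        (fun d : {d : ℕ // 0 < d ∧ (Nat.totient d : ℚ) / d = q} =>
          (⟨d.1 / r, hmem d⟩ : Nat.factoredNumbers S)) := by
      intro d e h
      simp only [Subtype.mk.injEq] at h
      apply Subtype.ext
      rw [← Nat.div_mul_cancel (hdvd d), ← Nat.div_mul_cancel (hdvd e), h]
    calc ∑' d : {d : ℕ // 0 < d ∧ (Nat.totient d : ℚ) / d = q}, (1 : ℝ≥0∞) / (d.1 : ℝ≥0∞)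
        = ∑' d : {d : ℕ // 0 < d ∧ (Nat.totient d : ℚ) / d = q},
            (r : ℝ≥0∞)⁻¹ * (((d.1 / r : ℕ) : ℝ≥0∞))⁻¹ := by
          apply tsum_congr
          intro d
          rw [one_div, ← ENNReal.mul_inv (Or.inr (ENNReal.natCast_ne_top _))
            (Or.inl (ENNReal.natCast_ne_top _))]
          congr 1
          rw [← Nat.cast_mul]
          congr 1
          exact (Nat.mul_div_cancel' (hdvd d)).symm
      _ = (r : ℝ≥0∞)⁻¹ * ∑' d : {d : ℕ // 0 < d ∧ (Nat.totient d : ℚ) / d = q},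
            (((d.1 / r : ℕ) : ℝ≥0∞))⁻¹ := ENNReal.tsum_mul_left
      _ ≤ (r : ℝ≥0∞)⁻¹ * ∑' m : Nat.factoredNumbers S, ((m : ℕ) : ℝ≥0∞)⁻¹ := by
          apply mul_le_mul_right
          exact ENNReal.tsum_comp_le_tsum_of_injective hinj
            (fun m : Nat.factoredNumbers S => ((m : ℕ) : ℝ≥0∞)⁻¹)
      _ = (r : ℝ≥0∞)⁻¹ * ∏ p ∈ S, (1 - ((p : ℝ≥0∞))⁻¹)⁻¹ := by
          rw [aux_euler S hSprime]
      _ ≤ 1 := aux_bound S hSprime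
  · haveI := not_nonempty_iff.mp hne
    rw [tsum_empty]
    exact zero_le_one
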